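/- Let H₁ and H₂ be complete Hilbert spaces over 𝕜 (𝕜 = ℝ or ℂ) with H₁ nontrivial, and let T : H₁ → H₂ be a bounded linear operator. Then the linear span of m_T equals the eigenspace of T*T corresponding to m(T)², i.e., span(m_T) = {x ∈ H₁ : T*Tx = m(T)² x}, where T* denotes the Hilbert-space adjoint of T. In particular, the dimension of the subspace whose unit sphere is m_T equals the geometric multiplicity of the eigenvalue m(T)² of T*T. -/

import Mathlib

open RCLike ContinuousLinearMap

/-- The minimum norm of a bounded linear operator. -/
noncomputable def minNorm {𝕜 X Y : Type*} [RCLike 𝕜] [NormedAddCommGroup X]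
    [NormedSpace 𝕜 X] [NormedAddCommGroup Y] [NormedSpace 𝕜 Y] (T : X →L[𝕜] Y) : ℝ :=
  sInf {r : ℝ | ∃ x : X, ‖x‖ = 1 ∧ r = ‖T x‖}

theorem stmt_10 {𝕜 H₁ H₂ : Type*} [RCLike 𝕜]
    [NormedAddCommGroup H₁] [InnerProductSpace 𝕜 H₁] [CompleteSpace H₁] [Nontrivial H₁]
    [NormedAddCommGroup H₂] [InnerProductSpace 𝕜 H₂] [CompleteSpace H₂]
    (T : H₁ →L[𝕜] H₂) :
    (Submodule.span 𝕜 {x : H₁ | ‖x‖ = 1 ∧ ‖T x‖ = minNorm T} : Set H₁) =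
      {x : H₁ | ContinuousLinearMap.adjoint T (T x) = ((minNorm T : 𝕜) ^ 2) • x} := by
  classical
  set m := minNorm T with hmdef
  set S := {r : ℝ | ∃ x : H₁, ‖x‖ = 1 ∧ r = ‖T x‖} with hSdef
  have hmS : m = sInf S := rfl
  have hne : S.Nonempty := by
    obtain ⟨v, hv⟩ := exists_ne (0 : H₁)
    have hnv : ‖v‖ ≠ 0 := norm_ne_zero_iff.mpr hv
    refine ⟨‖T (((‖v‖⁻¹ : ℝ) : 𝕜) • v)‖, ((‖v‖⁻¹ : ℝ) : 𝕜) • v, ?_, rfl⟩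
    rw [norm_smul, RCLike.norm_ofReal, abs_of_nonneg (by positivity)]
    field_simp
  have hbdd : BddBelow S := ⟨0, fun r ⟨x, _, hr⟩ => hr ▸ norm_nonneg _⟩
  have hm0 : 0 ≤ m := by
    rw [hmS]; exact le_csInf hne (fun r ⟨x, _, hr⟩ => hr ▸ norm_nonneg _)
  have hlow : ∀ z : H₁, m * ‖z‖ ≤ ‖T z‖ := by
    intro z
    rcases eq_or_ne z 0 with rfl | hz
    · simp
    · have hnz : ‖z‖ ≠ 0 := norm_ne_zero_iff.mpr hz
      have h1 : ‖(((‖z‖⁻¹ : ℝ) : 𝕜) • z)‖ = 1 := by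
        rw [norm_smul, RCLike.norm_ofReal, abs_of_nonneg (by positivity)]
        field_simp
      have hle : m ≤ ‖T (((‖z‖⁻¹ : ℝ) : 𝕜) • z)‖ := hmS ▸ csInf_le hbdd ⟨_, h1, rfl⟩
      rw [map_smul, norm_smul, RCLike.norm_ofReal, abs_of_nonneg (by positivity)] at hle
      calc m * ‖z‖ ≤ ‖z‖⁻¹ * ‖T z‖ * ‖z‖ := mul_le_mul_of_nonneg_right hle (norm_nonneg z)
        _ = ‖T z‖ := by field_simp
  have key : ∀ x : H₁, ‖x‖ = 1 → ‖T x‖ = m →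
      ContinuousLinearMap.adjoint T (T x) = ((m : 𝕜) ^ 2) • x := by
    intro x hx hTx
    have hre : ∀ y : H₁, re (inner 𝕜 (T x) (T y)) = m ^ 2 * re (inner 𝕜 x y) := by
      intro y
      set a : ℝ := re (inner 𝕜 (T x) (T y)) - m ^ 2 * re (inner 𝕜 x y) with ha
      set b : ℝ := ‖T y‖ ^ 2 - m ^ 2 * ‖y‖ ^ 2 with hb
      have hb0 : 0 ≤ b := by
        rw [hb]
        nlinarith [mul_self_le_mul_self (mul_nonneg hm0 (norm_nonneg y)) (hlow y)]
      have hq : ∀ t : ℝ, 0 ≤ 2 * t * a + t ^ 2 * b := by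
        intro t
        have h1 : m * ‖x + ((t : 𝕜)) • y‖ ≤ ‖T (x + ((t : 𝕜)) • y)‖ := hlow _
        have h2 : m ^ 2 * ‖x + ((t : 𝕜)) • y‖ ^ 2 ≤ ‖T (x + ((t : 𝕜)) • y)‖ ^ 2 := by
          nlinarith [mul_self_le_mul_self (mul_nonneg hm0 (norm_nonneg (x + ((t : 𝕜)) • y))) h1]
        have e1 : ‖T (x + ((t : 𝕜)) • y)‖ ^ 2
            = ‖T x‖ ^ 2 + 2 * (t * re (inner 𝕜 (T x) (T y))) + t ^ 2 * ‖T y‖ ^ 2 := by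
          rw [map_add, map_smul, @norm_add_sq 𝕜, inner_smul_right, re_ofReal_mul,
            norm_smul, RCLike.norm_ofReal, mul_pow, sq_abs]
        have e2 : ‖x + ((t : 𝕜)) • y‖ ^ 2
            = ‖x‖ ^ 2 + 2 * (t * re (inner 𝕜 x y)) + t ^ 2 * ‖y‖ ^ 2 := by
          rw [@norm_add_sq 𝕜, inner_smul_right, re_ofReal_mul,
            norm_smul, RCLike.norm_ofReal, mul_pow, sq_abs]
        rw [e1, e2] at h2
        have hx2 : ‖T x‖ ^ 2 = m ^ 2 * ‖x‖ ^ 2 := by rw [hTx, hx]; ring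
        rw [hx2] at h2
        rw [ha, hb]
        nlinarith [h2]
      have hd : a / (b + 1) * (b + 1) = a := div_mul_cancel₀ a (by linarith)
      have h := hq (-(a / (b + 1)))
      nlinarith [sq_nonneg (a / (b + 1)), hb0, h, hd]
    have hz : ∀ y : H₁,
        re (inner 𝕜 (ContinuousLinearMap.adjoint T (T x) - ((m : 𝕜) ^ 2) • x) y) = 0 := by
      intro y
      rw [inner_sub_left, ContinuousLinearMap.adjoint_inner_left, inner_smul_left,
        ← RCLike.ofReal_pow, RCLike.conj_ofReal, map_sub, re_ofReal_mul, hre]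
      ring
    have h0 : ContinuousLinearMap.adjoint T (T x) - ((m : 𝕜) ^ 2) • x = 0 := by
      have h := hz (ContinuousLinearMap.adjoint T (T x) - ((m : 𝕜) ^ 2) • x)
      rw [inner_self_eq_norm_sq] at h
      have : ‖ContinuousLinearMap.adjoint T (T x) - ((m : 𝕜) ^ 2) • x‖ = 0 :=
        by nlinarith [norm_nonneg (ContinuousLinearMap.adjoint T (T x) - ((m : 𝕜) ^ 2) • x)]
      exact norm_eq_zero.mp this
    exact sub_eq_zero.mp h0
  apply Set.Subset.antisymm
  · -- span ⊆ eigenspace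
    have hsub : Submodule.span 𝕜 {x : H₁ | ‖x‖ = 1 ∧ ‖T x‖ = m} ≤
        LinearMap.ker ((((ContinuousLinearMap.adjoint T).comp T : H₁ →L[𝕜] H₁)
          - ((m : 𝕜) ^ 2) • ContinuousLinearMap.id 𝕜 H₁ : H₁ →L[𝕜] H₁) : H₁ →ₗ[𝕜] H₁) := by
      rw [Submodule.span_le]
      intro x ⟨hx1, hx2⟩
      simp only [SetLike.mem_coe, LinearMap.mem_ker, ContinuousLinearMap.coe_sub',
        Pi.sub_apply, ContinuousLinearMap.coe_comp', Function.comp_apply,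
        ContinuousLinearMap.coe_smul', Pi.smul_apply, ContinuousLinearMap.coe_id', id_eq,
        ContinuousLinearMap.coe_coe]
      rw [sub_eq_zero]
      exact key x hx1 hx2
    intro x hx
    have := hsub hx
    simp only [SetLike.mem_coe, LinearMap.mem_ker, ContinuousLinearMap.coe_sub',
      Pi.sub_apply, ContinuousLinearMap.coe_comp', Function.comp_apply,
      ContinuousLinearMap.coe_smul', Pi.smul_apply, ContinuousLinearMap.coe_id', id_eq,
      ContinuousLinearMap.coe_coe] at this
    exact Set.mem_setOf_eq ▸ sub_eq_zero.mp this
  · -- eigenspace ⊆ span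
    intro x hx
    simp only [Set.mem_setOf_eq] at hx
    rcases eq_or_ne x 0 with rfl | hx0
    · exact Submodule.zero_mem _
    · have hnx : ‖x‖ ≠ 0 := norm_ne_zero_iff.mpr hx0
      set u : H₁ := ((‖x‖⁻¹ : ℝ) : 𝕜) • x with hu
      have hu1 : ‖u‖ = 1 := by
        rw [hu, norm_smul, RCLike.norm_ofReal, abs_of_nonneg (by positivity)]
        field_simp
      have huAdj : ContinuousLinearMap.adjoint T (T u) = ((m : 𝕜) ^ 2) • u := by
        rw [hu, map_smul, map_smul, hx, smul_comm]
      have huT : ‖T u‖ = m := by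
        have h1 : re (inner 𝕜 (T u) (T u)) = m ^ 2 := by
          rw [← ContinuousLinearMap.adjoint_inner_left, huAdj, inner_smul_left,
            ← RCLike.ofReal_pow, RCLike.conj_ofReal, re_ofReal_mul,
            inner_self_eq_norm_sq, hu1]
          ring
        rw [inner_self_eq_norm_sq] at h1
        nlinarith [norm_nonneg (T u), hm0]
      have humem : u ∈ Submodule.span 𝕜 {x : H₁ | ‖x‖ = 1 ∧ ‖T x‖ = m} :=
        Submodule.subset_span ⟨hu1, huT⟩
      have : ((‖x‖ : ℝ) : 𝕜) • u ∈ Submodule.span 𝕜 {x : H₁ | ‖x‖ = 1 ∧ ‖T x‖ = m} :=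
        Submodule.smul_mem _ _ humem
      rwa [hu, smul_smul, ← RCLike.ofReal_mul, mul_inv_cancel₀ hnx, RCLike.ofReal_one,
        one_smul] at this
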